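/- If Q is a rate matrix (real square matrix with nonnegative off-diagonal entries and rows summing to zero), then exp(Q) is a Markov matrix. -/

import Mathlib

open Matrix

/-- A Markov matrix: nonnegative entries, rows summing to one. -/
def IsMarkov {n : ℕ} (M : Matrix (Fin n) (Fin n) ℝ) : Prop :=
  (∀ i j, 0 ≤ M i j) ∧ ∀ i, ∑ j, M i j = 1

/-- A rate matrix: nonnegative off-diagonal entries, rows summing to zero. -/
def IsRate {n : ℕ} (Q : Matrix (Fin n) (Fin n) ℝ) : Prop :=
  (∀ i j, i ≠ j → 0 ≤ Q i j) ∧ ∀ i, ∑ j, Q i j = 0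

private lemma summable_exp_series {n : ℕ} (A : Matrix (Fin n) (Fin n) ℝ) :
    Summable fun k : ℕ => ((k.factorial : ℝ)⁻¹) • A ^ k := by
  letI : SeminormedRing (Matrix (Fin n) (Fin n) ℝ) := Matrix.linftyOpSemiNormedRing
  letI : NormedRing (Matrix (Fin n) (Fin n) ℝ) := Matrix.linftyOpNormedRing
  letI : NormedAlgebra ℝ (Matrix (Fin n) (Fin n) ℝ) := Matrix.linftyOpNormedAlgebra
  exact NormedSpace.expSeries_summable' A

/-- The continuous linear map extracting an entry of a matrix. -/
private def entryCLM {n : ℕ} (i j : Fin n) : Matrix (Fin n) (Fin n) ℝ →L[ℝ] ℝ where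
  toFun M := M i j
  map_add' _ _ := rfl
  map_smul' _ _ := rfl
  cont := continuous_id.matrix_elem i j

/-- The continuous linear map taking a row sum of a matrix. -/
private def rowCLM {n : ℕ} (i : Fin n) : Matrix (Fin n) (Fin n) ℝ →L[ℝ] ℝ where
  toFun M := ∑ j, M i j
  map_add' _ _ := by simp [Finset.sum_add_distrib]
  map_smul' _ _ := by simp [Finset.mul_sum]
  cont := continuous_finset_sum _ fun j _ => continuous_id.matrix_elem i j

private lemma exp_entry {n : ℕ} (A : Matrix (Fin n) (Fin n) ℝ) (i j : Fin n) :
    NormedSpace.exp A i j = ∑' k : ℕ, ((k.factorial : ℝ)⁻¹) * (A ^ k) i j := by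
  have h := (entryCLM i j).map_tsum (summable_exp_series A)
  rw [NormedSpace.exp_eq_tsum (𝕂 := ℝ)]
  exact h

private lemma exp_rowsum {n : ℕ} (A : Matrix (Fin n) (Fin n) ℝ) (i : Fin n) :
    ∑ j, NormedSpace.exp A i j
      = ∑' k : ℕ, ((k.factorial : ℝ)⁻¹) * ∑ j, (A ^ k) i j := by
  have h := (rowCLM i).map_tsum (summable_exp_series A)
  rw [NormedSpace.exp_eq_tsum (𝕂 := ℝ)]
  simpa [rowCLM, smul_eq_mul, Finset.mul_sum] using h

private lemma pow_entry_nonneg {n : ℕ} {A : Matrix (Fin n) (Fin n) ℝ}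
    (hA : ∀ i j, 0 ≤ A i j) (k : ℕ) : ∀ i j, 0 ≤ (A ^ k) i j := by
  induction k with
  | zero => intro i j; simp [Matrix.one_apply]; positivity
  | succ m ih =>
      intro i j
      rw [pow_succ, Matrix.mul_apply]
      exact Finset.sum_nonneg fun l _ => mul_nonneg (ih i l) (hA l j)

/-- The exponential of a rate matrix is a Markov matrix. -/
theorem isMarkov_exp_of_isRate {n : ℕ} (Q : Matrix (Fin n) (Fin n) ℝ) (hQ : IsRate Q) :
    IsMarkov (NormedSpace.exp Q) := by
  obtain ⟨hoff, hrow⟩ := hQ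
  constructor
  · -- nonnegativity
    set c : ℝ := ∑ i, |Q i i| with hc
    set D : Matrix (Fin n) (Fin n) ℝ := Matrix.diagonal (fun _ => -c) with hD
    set A : Matrix (Fin n) (Fin n) ℝ := Q - D with hA
    have hAnn : ∀ i j, 0 ≤ A i j := by
      intro i j
      by_cases hij : i = j
      · subst hij
        have h1 : |Q i i| ≤ c :=
          Finset.single_le_sum (fun l _ => abs_nonneg (Q l l)) (Finset.mem_univ i)
        have h2 : -Q i i ≤ c := (neg_le_abs _).trans h1
        simp only [hA, hD, Matrix.sub_apply, Matrix.diagonal_apply_eq]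
        linarith
      · simp only [hA, hD, Matrix.sub_apply, Matrix.diagonal_apply_ne _ hij]
        simpa using hoff i j hij
    have hcomm : Commute A D := by
      show A * D = D * A
      ext i j
      simp [hD, Matrix.mul_diagonal, Matrix.diagonal_mul, mul_comm]
    have hQAD : Q = A + D := by simp [hA]
    rw [hQAD, Matrix.exp_add_of_commute A D hcomm]
    have hexpD : NormedSpace.exp D = Matrix.diagonal (fun _ : Fin n => Real.exp (-c)) := by
      rw [hD, Matrix.exp_diagonal, Pi.exp_def]
      simp [Real.exp_eq_exp_ℝ]
    intro i j
    rw [hexpD, Matrix.mul_diagonal]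
    have h1 : 0 ≤ NormedSpace.exp A i j := by
      rw [exp_entry]
      exact tsum_nonneg fun k => mul_nonneg (by positivity) (pow_entry_nonneg hAnn k i j)
    exact mul_nonneg h1 (Real.exp_nonneg _)
  · -- row sums
    intro i
    rw [exp_rowsum]
    have hpow : ∀ k : ℕ, 1 ≤ k → ∑ j, (Q ^ k) i j = 0 := by
      intro k hk
      obtain ⟨m, rfl⟩ := Nat.exists_eq_add_of_le' hk
      rw [pow_succ]
      calc ∑ j, (Q ^ m * Q) i j = ∑ j, ∑ l, (Q ^ m) i l * Q l j := by
            simp [Matrix.mul_apply]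
        _ = ∑ l, (Q ^ m) i l * ∑ j, Q l j := by
            rw [Finset.sum_comm]; simp [Finset.mul_sum]
        _ = 0 := by simp [hrow]
    rw [tsum_eq_single 0]
    · simp [Matrix.one_apply]
    · intro k hk
      rw [hpow k (Nat.one_le_iff_ne_zero.mpr hk), mul_zero]
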